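/- Let K be a commutative integral domain, let Γ be a finitely generated torsion-free abelian group, and let φ : Γ → ℝ be a group homomorphism. Then the Novikov ring Λ^K_φ(Γ) is a commutative integral domain. -/

import Mathlib

/-- The underlying set of the Novikov ring with coefficients in `K`, over an index
type `Γ` weighted by `w : Γ → ℝ`: functions `r : Γ → K` such that for every `c : ℝ`
only finitely many `γ` with `w γ < c` have `r γ ≠ 0`.  Taking `w = φ` for a group
homomorphism `φ : Γ → ℝ` gives `Λ^K_φ(Γ)`. -/
def NovikovSet (K : Type*) [Zero K] {Γ : Type*} (w : Γ → ℝ) : Set (Γ → K) :=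
  {r | ∀ c : ℝ, {γ : Γ | r γ ≠ 0 ∧ w γ < c}.Finite}

/-- A commutative ring structure on a set `S` of functions `Γ → K` is a Novikov ring
structure if addition is pointwise and multiplication is the convolution product
`(r·s)(γ) = Σ_{α+β=γ} r(α)s(β)`. -/
def IsNovikovRingStructure {K Γ : Type*} [CommRing K] [AddCommGroup Γ]
    (S : Set (Γ → K)) [CommRing ↥S] : Prop :=
  (∀ a b : ↥S, ∀ γ : Γ, ((a + b : ↥S) : Γ → K) γ = a.1 γ + b.1 γ) ∧
  (∀ a b : ↥S, ∀ γ : Γ, ((a * b : ↥S) : Γ → K) γ = ∑ᶠ α : Γ, a.1 α * b.1 (γ - α))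

/-- A finitely generated torsion-free abelian group embeds into `Lex (Fin n → ℤ)`. -/
lemma exists_lex_embedding (Γ : Type*) [AddCommGroup Γ] [AddGroup.FG Γ]
    (hTF : IsAddTorsionFree Γ) :
    ∃ (n : ℕ) (ψ : Γ →+ Lex (Fin n → ℤ)), Function.Injective ψ := by
  haveI : Module.Finite ℤ Γ := Module.Finite.iff_addGroup_fg.mpr ‹_›
  haveI : NoZeroSMulDivisors ℤ Γ := @IsAddTorsionFree.to_noZeroSMulDivisors_int _ _ hTF
  haveI : Module.Free ℤ Γ := Module.free_of_finite_type_torsion_free'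
  let b := Module.Free.chooseBasis ℤ Γ
  let ι := Module.Free.ChooseBasisIndex ℤ Γ
  let e : Γ ≃ₗ[ℤ] (ι → ℤ) := b.equivFun
  let eq : ι ≃ Fin (Fintype.card ι) := Fintype.equivFin ι
  refine ⟨Fintype.card ι,
    { toFun := fun γ => toLex (fun i => e γ (eq.symm i))
      map_zero' := congrArg toLex (funext fun i => by simp)
      map_add' := fun x y => by
        have h : (fun i => e (x + y) (eq.symm i))
            = (fun i => e x (eq.symm i)) + (fun i => e y (eq.symm i)) := by
          funext i; simp
        show toLex _ = toLex _ + toLex _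
        rw [h]; rfl },
    ?_⟩
  intro x y h
  apply e.injective
  funext j
  have := congrFun (congrArg ofLex h) (eq j)
  change e x (eq.symm (eq j)) = e y (eq.symm (eq j)) at this
  simpa using this

/-- A finitely generated torsion-free abelian group admits an injective additive map
into some linearly ordered abelian group. -/
lemma exists_ordered_embedding (Γ : Type*) [AddCommGroup Γ] [AddGroup.FG Γ]
    (hTF : IsAddTorsionFree Γ) :
    ∃ (L : Type) (iG : AddCommGroup L) (iO : LinearOrder L) (iM : IsOrderedAddMonoid L),
      ∃ ψ : Γ → L, Function.Injective ψ ∧ ∀ x y, ψ (x + y) = ψ x + ψ y := by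
  obtain ⟨n, ψ0, hψ0⟩ := exists_lex_embedding Γ hTF
  haveI hwf : WellFoundedLT (Fin n) := inferInstance
  refine ⟨Lex (Fin n → ℤ), inferInstance, inferInstance, inferInstance, ψ0, hψ0, fun x y => ?_⟩
  exact map_add ψ0 x y

/-- Let `K` be a commutative integral domain, `Γ` a finitely generated torsion-free
abelian group, and `φ : Γ → ℝ` a group homomorphism.  Then the Novikov ring
`Λ^K_φ(Γ)` is a commutative integral domain. -/
theorem novikovRing_phi_isDomain
    (K : Type*) [CommRing K] [IsDomain K]
    (Γ : Type*) [AddCommGroup Γ] [AddGroup.FG Γ] (hTF : ∀ g : Γ, g ≠ 0 → ¬IsOfFinAddOrder g)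
    (φ : Γ →+ ℝ)
    [CommRing ↥(NovikovSet K ⇑φ)]
    (hS : IsNovikovRingStructure (NovikovSet K ⇑φ)) :
    IsDomain ↥(NovikovSet K ⇑φ) := by
  classical
  obtain ⟨hadd, hmul⟩ := hS
  -- the zero of the ring is the zero function
  have hzero : ∀ γ : Γ, ((0 : ↥(NovikovSet K ⇑φ)) : Γ → K) γ = 0 := by
    intro γ
    have h := hadd 0 0 γ
    rw [show (0 : ↥(NovikovSet K ⇑φ)) + 0 = 0 from add_zero 0] at h
    exact left_eq_add.mp h
  -- nonzero ring elements are nonzero functions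
  have hne : ∀ a : ↥(NovikovSet K ⇑φ), a ≠ 0 → ∃ γ, a.1 γ ≠ 0 := by
    intro a ha
    by_contra h
    push_neg at h
    exact ha (Subtype.ext (funext fun γ => (h γ).trans (hzero γ).symm))
  -- delta functions belong to the Novikov set
  have hdelta : ∀ (γ0 : Γ) (k : K),
      (fun γ => if γ = γ0 then k else 0) ∈ NovikovSet K ⇑φ := by
    intro γ0 k c
    apply Set.Finite.subset (Set.finite_singleton γ0)
    rintro γ ⟨h1, -⟩
    simp only [Set.mem_singleton_iff]
    by_contra hγ
    exact h1 (if_neg hγ)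
  -- the ring is nontrivial
  haveI : Nontrivial ↥(NovikovSet K ⇑φ) := by
    refine ⟨⟨1, 0, fun h10 => ?_⟩⟩
    set a : ↥(NovikovSet K ⇑φ) :=
      ⟨fun γ => if γ = 0 then (1 : K) else 0, hdelta 0 1⟩ with hadef
    have hA : a = 0 := by rw [← mul_one a, h10, mul_zero]
    have := congrArg (fun x : ↥(NovikovSet K ⇑φ) => x.1 (0 : Γ)) hA
    simp only [hadef, hzero, if_pos rfl] at this
    exact one_ne_zero this
  -- the ordered embedding
  obtain ⟨L, iG, iO, iM, ψ, hψ, hψadd⟩ := exists_ordered_embedding Γ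
    (isAddTorsionFree_iff_not_isOfFinAddOrder.mpr fun _ h => hTF _ h)
  -- minimal level sets
  have hmin : ∀ a : ↥(NovikovSet K ⇑φ), a ≠ 0 → ∃ (m : ℝ) (A : Finset Γ), A.Nonempty ∧
      (∀ γ ∈ A, a.1 γ ≠ 0 ∧ φ γ = m) ∧ (∀ γ, a.1 γ ≠ 0 → m ≤ φ γ) ∧
      (∀ γ, a.1 γ ≠ 0 → φ γ = m → γ ∈ A) := by
    intro a ha
    obtain ⟨γ1, h1⟩ := hne a ha
    have hT : {γ : Γ | a.1 γ ≠ 0 ∧ φ γ < φ γ1 + 1}.Finite := a.2 (φ γ1 + 1)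
    set T : Finset Γ := hT.toFinset with hTdef
    have hγ1T : γ1 ∈ T := hT.mem_toFinset.mpr ⟨h1, by linarith⟩
    have hInonempty : (T.image φ).Nonempty := ⟨φ γ1, Finset.mem_image_of_mem φ hγ1T⟩
    set m : ℝ := (T.image φ).min' hInonempty with hmdef
    have hmle : ∀ γ ∈ T, m ≤ φ γ := fun γ hγ =>
      Finset.min'_le _ _ (Finset.mem_image_of_mem φ hγ)
    have hlow : ∀ γ, a.1 γ ≠ 0 → m ≤ φ γ := by
      intro γ hγ
      by_cases hc : φ γ < φ γ1 + 1
      · exact hmle γ (hT.mem_toFinset.mpr ⟨hγ, hc⟩)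
      · push_neg at hc
        have := hmle γ1 hγ1T
        linarith
    obtain ⟨γm, hγmT, hγm⟩ := Finset.mem_image.mp ((T.image φ).min'_mem hInonempty)
    refine ⟨m, T.filter (fun γ => φ γ = m), ⟨γm, Finset.mem_filter.mpr ⟨hγmT, hγm⟩⟩,
      ?_, hlow, ?_⟩
    · intro γ hγ
      obtain ⟨hγT, hγm'⟩ := Finset.mem_filter.mp hγ
      exact ⟨(hT.mem_toFinset.mp hγT).1, hγm'⟩
    · intro γ hγ hφγ
      have hγT : γ ∈ T := by
        apply hT.mem_toFinset.mpr
        refine ⟨hγ, ?_⟩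
        have := hmle γ1 hγ1T
        rw [hφγ]; linarith
      exact Finset.mem_filter.mpr ⟨hγT, hφγ⟩
  -- no zero divisors
  haveI : NoZeroDivisors ↥(NovikovSet K ⇑φ) := by
    constructor
    intro a b hab
    by_contra hcon
    push_neg at hcon
    obtain ⟨ha, hb⟩ := hcon
    obtain ⟨ma, A, hAne, hAmem, hAlow, hAall⟩ := hmin a ha
    obtain ⟨mb, B, hBne, hBmem, hBlow, hBall⟩ := hmin b hb
    -- minimizers of ψ on A and B
    have hAψ := (A.image ψ).min'_mem (hAne.image ψ)
    obtain ⟨α₀, hα₀A, hα₀⟩ := Finset.mem_image.mp hAψ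
    have hBψ := (B.image ψ).min'_mem (hBne.image ψ)
    obtain ⟨β₀, hβ₀B, hβ₀⟩ := Finset.mem_image.mp hBψ
    have hα₀min : ∀ α ∈ A, ψ α₀ ≤ ψ α := fun α hα =>
      hα₀ ▸ Finset.min'_le _ _ (Finset.mem_image_of_mem ψ hα)
    have hβ₀min : ∀ β ∈ B, ψ β₀ ≤ ψ β := fun β hβ =>
      hβ₀ ▸ Finset.min'_le _ _ (Finset.mem_image_of_mem ψ hβ)
    obtain ⟨hα₀ne, hα₀φ⟩ := hAmem α₀ hα₀A
    obtain ⟨hβ₀ne, hβ₀φ⟩ := hBmem β₀ hβ₀B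
    -- compute the product at α₀ + β₀
    have key : ((a * b : ↥(NovikovSet K ⇑φ)) : Γ → K) (α₀ + β₀) = a.1 α₀ * b.1 β₀ := by
      rw [hmul]
      have hsingle := finsum_eq_single (fun α => a.1 α * b.1 (α₀ + β₀ - α)) α₀ ?_
      · rw [hsingle, add_sub_cancel_left]
      · intro α hα
        by_contra hne0
        change ¬(a.1 α * b.1 (α₀ + β₀ - α) = 0) at hne0
        have haα : a.1 α ≠ 0 := fun h => hne0 (by rw [h, zero_mul])
        have hbβ : b.1 (α₀ + β₀ - α) ≠ 0 := fun h => hne0 (by rw [h, mul_zero])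
        set β := α₀ + β₀ - α with hβdef
        have hsum : α + β = α₀ + β₀ := by rw [hβdef]; abel
        have hφsum : φ α + φ β = ma + mb := by
          rw [← map_add, hsum, map_add, hα₀φ, hβ₀φ]
        have h1 : ma ≤ φ α := hAlow α haα
        have h2 : mb ≤ φ β := hBlow β hbβ
        have hφα : φ α = ma := by linarith
        have hφβ : φ β = mb := by linarith
        have hαA : α ∈ A := hAall α haα hφα
        have hβB : β ∈ B := hBall β hbβ hφβ
        have hψsum : ψ α + ψ β = ψ α₀ + ψ β₀ := by
          rw [← hψadd, hsum, hψadd]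
        have hψα : ψ α = ψ α₀ := by
          refine le_antisymm ?_ (hα₀min α hαA)
          have hb' := hβ₀min β hβB
          have : ψ α + ψ β₀ ≤ ψ α + ψ β := add_le_add_right hb' _
          rw [hψsum] at this
          exact le_of_add_le_add_right this
        exact hα (hψ hψα)
    rw [hab, hzero] at key
    exact mul_ne_zero hα₀ne hβ₀ne key.symm
  exact NoZeroDivisors.to_isDomain ↥(NovikovSet K ⇑φ)
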